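/- Reciprocal logarithmic cosine inequality (key inequality in the proof of the asymptotic bound for N_tv): for every real number Δθ with -π < Δθ < π and Δθ ≠ 0, one has 1 / Real.log ((Real.cos (Δθ/2))^2) ≥ -4 / Δθ². -/

import Mathlib

/-- For `|x| ≤ 2`, `cos x ≤ (1 - x²/4)²`. -/
lemma cos_le_quartic_aux (x : ℝ) (hx : |x| ≤ 2) :
    Real.cos x ≤ (1 - x ^ 2 / 4) ^ 2 := by
  -- reduce to the case 0 ≤ x by evenness
  wlog hx0 : 0 ≤ x generalizing x
  · have := this (-x) (by rwa [abs_neg]) (by linarith [le_of_not_ge hx0])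
    simpa using this
  rcases eq_or_lt_of_le hx0 with h | h
  · simp [← h]
  · have hx2 : x ≤ 2 := by
      rcases abs_le.mp hx with ⟨_, h⟩; exact h
    have hhalf1 : x / 2 ≤ 1 := by linarith
    have hhalf0 : 0 < x / 2 := by linarith
    have hs : x / 2 - (x / 2) ^ 3 / 4 < Real.sin (x / 2) := by
      have := Real.sin_gt_sub_cube hhalf0; linarith [pow_pos hhalf0 3]
    have hcos : Real.cos x = 1 - 2 * Real.sin (x / 2) ^ 2 := by
      have := Real.sin_sq_eq_half_sub (x := x / 2)
      rw [show 2 * (x / 2) = x by ring] at this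
      linarith
    have hlb : 0 ≤ x / 2 - (x / 2) ^ 3 / 4 := by
      have hsq1 : (x / 2) ^ 2 ≤ 1 := pow_le_one₀ hhalf0.le hhalf1 |>.trans_eq rfl
      have h3 : (x / 2) ^ 3 ≤ x / 2 := by nlinarith
      linarith
    have hsq : (x / 2 - (x / 2) ^ 3 / 4) ^ 2 ≤ Real.sin (x / 2) ^ 2 := by
      apply sq_le_sq' <;> nlinarith
    rw [hcos]
    nlinarith [sq_nonneg x, sq_nonneg (x ^ 2), sq_nonneg (x ^ 3)]

/-- Reciprocal logarithmic cosine inequality: for every real `Δθ` with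
`-π < Δθ < π` and `Δθ ≠ 0`, `1 / log (cos²(Δθ/2)) ≥ -4 / Δθ²`. -/
theorem one_div_log_cos_sq_ge (Δθ : ℝ) (h1 : -Real.pi < Δθ) (h2 : Δθ < Real.pi)
    (h0 : Δθ ≠ 0) :
    1 / Real.log ((Real.cos (Δθ / 2)) ^ 2) ≥ -4 / Δθ ^ 2 := by
  set y : ℝ := Δθ / 2 with hy
  have hpi : Real.pi < 3.15 := Real.pi_lt_d2
  have hy2 : |y| ≤ 2 := by
    rw [abs_le]; constructor <;> simp only [hy] <;> linarith
  have hcospos : 0 < Real.cos y := by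
    apply Real.cos_pos_of_mem_Ioo
    constructor <;> simp only [hy] <;> linarith
  have hq4 : 0 ≤ 1 - y ^ 2 / 4 := by
    have := abs_le.mp hy2
    nlinarith
  -- cos y ^ 2 ≤ (1 - y²/4)^4
  have hc2 : Real.cos y ^ 2 ≤ (1 - y ^ 2 / 4) ^ 4 := by
    have h := cos_le_quartic_aux y hy2
    nlinarith [hcospos.le]
  -- (1 - y²/4)^4 ≤ exp (-y²)
  have hexp : (1 - y ^ 2 / 4) ^ 4 ≤ Real.exp (-y ^ 2) := by
    have h1 : 1 - y ^ 2 / 4 ≤ Real.exp (-(y ^ 2 / 4)) := by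
      have := Real.add_one_le_exp (-(y ^ 2 / 4))
      linarith
    calc (1 - y ^ 2 / 4) ^ 4 ≤ Real.exp (-(y ^ 2 / 4)) ^ 4 :=
          pow_le_pow_left₀ hq4 h1 4
      _ = Real.exp (-y ^ 2) := by
          rw [← Real.exp_nat_mul]; congr 1; push_cast; ring
  have hlog : Real.log (Real.cos y ^ 2) ≤ -y ^ 2 :=
    (Real.log_le_iff_le_exp (by positivity)).mpr (hc2.trans hexp)
  have hyne : y ≠ 0 := by
    simp only [hy]; intro h; apply h0; linarith [h]
  have hy2pos : 0 < y ^ 2 := by positivity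
  have hLneg : Real.log (Real.cos y ^ 2) < 0 := lt_of_le_of_lt hlog (by linarith)
  set L := Real.log (Real.cos y ^ 2) with hL
  have h5 : 1 / (-L) ≤ 1 / y ^ 2 := by
    apply one_div_le_one_div_of_le hy2pos
    linarith
  have h6 : 1 / (-L) = -(1 / L) := by rw [div_neg]
  have h7 : -4 / Δθ ^ 2 = -(1 / y ^ 2) := by
    have : Δθ = 2 * y := by simp [hy]; ring
    rw [this]
    have : y ≠ 0 := hyne
    field_simp
    ring
  rw [ge_iff_le, h7]
  linarith [h5, h6.symm.le]
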